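/- For every iteration index i ≥ 0, every solar state z, and every channel state x, the difference function Θ_i(z,x,·) is monotonically non-decreasing on {1,…,N_B−1} (i.e. Θ_i(z,x,y) ≤ Θ_i(z,x,y+1) for all 1 ≤ y ≤ N_B−2). Consequently, the optimal on-off transmission policy at iteration i has a threshold structure: for each (z,x) there exists a threshold κ ∈ {0,…,N_B−1} such that Θ_i(z,x,y) < 0 for all y with 1 ≤ y ≤ κ and Θ_i(z,x,y) ≥ 0 for all y with κ+1 ≤ y ≤ N_B−1. -/

import Mathlib

/-!
On-off energy-harvesting MDP value iteration.
`Va` is the one-step action-value operator, `Viter i` is the `i`-th value-iteration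
function `V_i`, and `VIa i a` is the action-value function `V_i^a`.
-/

/-- The one-step action-value operator:
`Va NB aH pC pQ r lam V a z x y = a·r(x) + λ·Σ_j Σ_l Σ'_q aH(z,j)·pC(x,l)·pQ(z,q)·
V(j, l, min{N_B−1, y−a+q})`. -/
noncomputable def Va {NH NC : ℕ} (NB : ℕ) (aH : Fin NH → Fin NH → ℝ)
    (pC : Fin NC → Fin NC → ℝ) (pQ : Fin NH → ℕ → ℝ) (r : Fin NC → ℝ) (lam : ℝ)
    (V : Fin NH → Fin NC → ℕ → ℝ) (a : ℕ) (z : Fin NH) (x : Fin NC) (y : ℕ) : ℝ :=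
  a * r x + lam * ∑ j : Fin NH, ∑ l : Fin NC,
    ∑' q : ℕ, aH z j * pC x l * pQ z q * V j l (min (NB - 1) (y - a + q))

/-- Value iteration: `V_0 = 0` and `V_{i+1}(z,x,y) = max_{0 ≤ a ≤ min{y,1}} V_{i+1}^a(z,x,y)`. -/
noncomputable def Viter {NH NC : ℕ} (NB : ℕ) (aH : Fin NH → Fin NH → ℝ)
    (pC : Fin NC → Fin NC → ℝ) (pQ : Fin NH → ℕ → ℝ) (r : Fin NC → ℝ) (lam : ℝ) :
    ℕ → Fin NH → Fin NC → ℕ → ℝ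
  | 0 => fun _ _ _ => 0
  | (i + 1) => fun z x y =>
      (Finset.range (min y 1 + 1)).sup' Finset.nonempty_range_add_one
        (fun a => Va NB aH pC pQ r lam (Viter NB aH pC pQ r lam i) a z x y)

/-- Action-value iteration: `V_0^a = 0` and `V_{i+1}^a` is `Va` applied to `V_i`. -/
noncomputable def VIa {NH NC : ℕ} (NB : ℕ) (aH : Fin NH → Fin NH → ℝ)
    (pC : Fin NC → Fin NC → ℝ) (pQ : Fin NH → ℕ → ℝ) (r : Fin NC → ℝ) (lam : ℝ) :
    ℕ → ℕ → Fin NH → Fin NC → ℕ → ℝ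
  | 0 => fun _ _ _ _ => 0
  | (i + 1) => fun a z x y => Va NB aH pC pQ r lam (Viter NB aH pC pQ r lam i) a z x y

/-- The difference function `Θ_i(z,x,y) = V_i^1(z,x,y) − V_i^0(z,x,y)`. -/
noncomputable def Theta {NH NC : ℕ} (NB : ℕ) (aH : Fin NH → Fin NH → ℝ)
    (pC : Fin NC → Fin NC → ℝ) (pQ : Fin NH → ℕ → ℝ) (r : Fin NC → ℝ) (lam : ℝ)
    (i : ℕ) (z : Fin NH) (x : Fin NC) (y : ℕ) : ℝ :=
  VIa NB aH pC pQ r lam i 1 z x y - VIa NB aH pC pQ r lam i 0 z x y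

/-- The difference function
`Λ_i(z,x,y) = Σ_j Σ_l Σ'_q aH(z,j)·pC(x,l)·pQ(z,q)·
( V_i^1(j,l,min{N_B−1,y+q}) − V_i^0(j,l,min{N_B−1,y−1+q}) )`. -/
noncomputable def Lambda {NH NC : ℕ} (NB : ℕ) (aH : Fin NH → Fin NH → ℝ)
    (pC : Fin NC → Fin NC → ℝ) (pQ : Fin NH → ℕ → ℝ) (r : Fin NC → ℝ) (lam : ℝ)
    (i : ℕ) (z : Fin NH) (x : Fin NC) (y : ℕ) : ℝ :=
  ∑ j : Fin NH, ∑ l : Fin NC, ∑' q : ℕ,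
    aH z j * pC x l * pQ z q *
      (VIa NB aH pC pQ r lam i 1 j l (min (NB - 1) (y + q)) -
        VIa NB aH pC pQ r lam i 0 j l (min (NB - 1) (y - 1 + q)))



lemma gmax_aux (f G : ℕ → ℝ) (r0 : ℝ)
    (hfm : ∀ n, f n ≤ f (n+1)) (hfc : ∀ n, f n + f (n+2) ≤ 2 * f (n+1))
    (hG0 : G 0 = f 0) (hGs : ∀ n, G (n+1) = max (f (n+1)) (r0 + f n)) :
    (∀ n, G n ≤ G (n+1)) ∧ (∀ n, G n + G (n+2) ≤ 2 * G (n+1)) := by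
  constructor
  · intro n
    cases n with
    | zero =>
      rw [hG0, hGs]
      exact le_max_of_le_left (hfm 0)
    | succ n =>
      rw [hGs, hGs]
      exact max_le_max (hfm _) (by linarith [hfm n])
  · intro n
    cases n with
    | zero =>
      rw [hG0, hGs, hGs]
      have h1 : f 1 ≤ max (f 1) (r0 + f 0) := le_max_left _ _
      have h2 : r0 + f 0 ≤ max (f 1) (r0 + f 0) := le_max_right _ _
      rcases max_cases (f 2) (r0 + f 1) with ⟨h, _⟩ | ⟨h, _⟩ <;> rw [h]
      · linarith [hfc 0]
      · linarith
    | succ n =>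
      rw [hGs, hGs, hGs]
      have h1 : f (n+2) ≤ max (f (n+2)) (r0 + f (n+1)) := le_max_left _ _
      have h2 : r0 + f (n+1) ≤ max (f (n+2)) (r0 + f (n+1)) := le_max_right _ _
      have hc1 := hfc n
      have hc2 := hfc (n+1)
      rcases max_cases (f (n+1)) (r0 + f n) with ⟨h, _⟩ | ⟨h, _⟩ <;> rw [h] <;>
        (rcases max_cases (f (n+3)) (r0 + f (n+2)) with ⟨h', _⟩ | ⟨h', _⟩ <;> rw [h'])
      · have : f (n+1) + f (n+1+2) ≤ 2 * f (n+2) := hfc (n+1)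
        linarith
      · linarith
      · have : f (n+1) + f (n+1+2) ≤ 2 * f (n+2) := hfc (n+1)
        linarith
      · linarith

lemma cap_aux (G : ℕ → ℝ) (K : ℕ) (hm : ∀ n, G n ≤ G (n+1))
    (hc : ∀ n, G n + G (n+2) ≤ 2 * G (n+1)) :
    (∀ n, G (min K n) ≤ G (min K (n+1))) ∧
    (∀ n, G (min K n) + G (min K (n+2)) ≤ 2 * G (min K (n+1))) := by
  have hmono : Monotone G := monotone_nat_of_le_succ hm
  constructor
  · intro n
    exact hmono (min_le_min (le_refl K) (Nat.le_succ n))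
  · intro n
    rcases le_or_gt (n+2) K with h | h
    · rw [min_eq_right (by omega : n ≤ K), min_eq_right (by omega : n+1 ≤ K),
        min_eq_right h]
      exact hc n
    · rcases le_or_gt K n with h2 | h2
      · rw [min_eq_left h2, min_eq_left (by omega : K ≤ n+1), min_eq_left (by omega : K ≤ n+2)]
        linarith
      · have hK : K = n + 1 := by omega
        subst hK
        rw [min_eq_right (by omega : n ≤ n+1), min_self, min_eq_left (by omega : n+1 ≤ n+2)]
        linarith [hm n]

section SfunAux

variable {NH NC : ℕ} (NB : ℕ) (aH : Fin NH → Fin NH → ℝ)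
  (pC : Fin NC → Fin NC → ℝ) (pQ : Fin NH → ℕ → ℝ)

/-- The expected continuation value operator. -/
noncomputable def Sfun (U : Fin NH → Fin NC → ℕ → ℝ) (z : Fin NH) (x : Fin NC) (n : ℕ) : ℝ :=
  ∑ j : Fin NH, ∑ l : Fin NC,
    ∑' q : ℕ, aH z j * pC x l * pQ z q * U j l (min (NB - 1) (n + q))

variable (haH : ∀ z j, 0 ≤ aH z j) (hpC : ∀ x l, 0 ≤ pC x l)
  (hpQ : ∀ z q, 0 ≤ pQ z q) (hpQs : ∀ z, Summable (pQ z))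

include haH hpC hpQ hpQs in
lemma Sfun_summable (U : Fin NH → Fin NC → ℕ → ℝ) (K : ℝ)
    (hU0 : ∀ j l m, 0 ≤ U j l m) (hUK : ∀ j l m, U j l m ≤ K)
    (z : Fin NH) (x : Fin NC) (j : Fin NH) (l : Fin NC) (g : ℕ → ℕ) :
    Summable (fun q => aH z j * pC x l * pQ z q * U j l (g q)) := by
  refine Summable.of_nonneg_of_le
    (fun q => mul_nonneg (mul_nonneg (mul_nonneg (haH z j) (hpC x l)) (hpQ z q)) (hU0 _ _ _))
    (fun q => ?_) (((hpQs z).mul_left (aH z j * pC x l * K)))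
  calc aH z j * pC x l * pQ z q * U j l (g q)
      ≤ aH z j * pC x l * pQ z q * K := by
        exact mul_le_mul_of_nonneg_left (hUK _ _ _)
          (mul_nonneg (mul_nonneg (haH z j) (hpC x l)) (hpQ z q))
    _ = aH z j * pC x l * K * pQ z q := by ring

include haH hpC hpQ in
lemma Sfun_nonneg (U : Fin NH → Fin NC → ℕ → ℝ)
    (hU0 : ∀ j l m, 0 ≤ U j l m) (z : Fin NH) (x : Fin NC) (n : ℕ) :
    0 ≤ Sfun NB aH pC pQ U z x n := by
  refine Finset.sum_nonneg fun j _ => Finset.sum_nonneg fun l _ => tsum_nonneg fun q =>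
    mul_nonneg (mul_nonneg (mul_nonneg (haH z j) (hpC x l)) (hpQ z q)) (hU0 _ _ _)

include haH hpC hpQ hpQs in
lemma Sfun_le (haHsum : ∀ z, ∑ j, aH z j = 1) (hpCsum : ∀ x, ∑ l, pC x l = 1)
    (hpQsum : ∀ z, (∑' q, pQ z q) = 1)
    (U : Fin NH → Fin NC → ℕ → ℝ) (K : ℝ)
    (hU0 : ∀ j l m, 0 ≤ U j l m) (hUK : ∀ j l m, U j l m ≤ K)
    (z : Fin NH) (x : Fin NC) (n : ℕ) :
    Sfun NB aH pC pQ U z x n ≤ K := by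
  have step : ∀ j l, (∑' q, aH z j * pC x l * pQ z q * U j l (min (NB - 1) (n + q)))
      ≤ aH z j * pC x l * K := by
    intro j l
    have h1 : (∑' q, aH z j * pC x l * pQ z q * U j l (min (NB - 1) (n + q)))
        ≤ ∑' q, aH z j * pC x l * K * pQ z q := by
      refine Summable.tsum_le_tsum (fun q => ?_)
        (Sfun_summable aH pC pQ haH hpC hpQ hpQs U K hU0 hUK z x j l _)
        ((hpQs z).mul_left _)
      calc aH z j * pC x l * pQ z q * U j l (min (NB - 1) (n + q))
          ≤ aH z j * pC x l * pQ z q * K := mul_le_mul_of_nonneg_left (hUK _ _ _)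
            (mul_nonneg (mul_nonneg (haH z j) (hpC x l)) (hpQ z q))
        _ = aH z j * pC x l * K * pQ z q := by ring
    rw [tsum_mul_left, hpQsum z, mul_one] at h1
    exact h1
  calc Sfun NB aH pC pQ U z x n ≤ ∑ j : Fin NH, ∑ l : Fin NC, aH z j * pC x l * K :=
      Finset.sum_le_sum fun j _ => Finset.sum_le_sum fun l _ => step j l
    _ = K := by
      simp_rw [mul_assoc, ← Finset.mul_sum, ← Finset.sum_mul, hpCsum, haHsum, one_mul]

include haH hpC hpQ hpQs in
lemma Sfun_mono (U : Fin NH → Fin NC → ℕ → ℝ) (K : ℝ)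
    (hU0 : ∀ j l m, 0 ≤ U j l m) (hUK : ∀ j l m, U j l m ≤ K)
    (hUm : ∀ j l m, U j l (min (NB - 1) m) ≤ U j l (min (NB - 1) (m+1)))
    (z : Fin NH) (x : Fin NC) (n : ℕ) :
    Sfun NB aH pC pQ U z x n ≤ Sfun NB aH pC pQ U z x (n+1) := by
  refine Finset.sum_le_sum fun j _ => Finset.sum_le_sum fun l _ => ?_
  refine Summable.tsum_le_tsum (fun q => ?_)
    (Sfun_summable aH pC pQ haH hpC hpQ hpQs U K hU0 hUK z x j l _)
    (Sfun_summable aH pC pQ haH hpC hpQ hpQs U K hU0 hUK z x j l _)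
  have h := hUm j l (n + q)
  rw [show n + q + 1 = n + 1 + q by ring] at h
  exact mul_le_mul_of_nonneg_left h
    (mul_nonneg (mul_nonneg (haH z j) (hpC x l)) (hpQ z q))

include haH hpC hpQ hpQs in
lemma Sfun_concave (U : Fin NH → Fin NC → ℕ → ℝ) (K : ℝ)
    (hU0 : ∀ j l m, 0 ≤ U j l m) (hUK : ∀ j l m, U j l m ≤ K)
    (hUc : ∀ j l m, U j l (min (NB - 1) m) + U j l (min (NB - 1) (m+2))
      ≤ 2 * U j l (min (NB - 1) (m+1)))
    (z : Fin NH) (x : Fin NC) (n : ℕ) :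
    Sfun NB aH pC pQ U z x n + Sfun NB aH pC pQ U z x (n+2)
      ≤ 2 * Sfun NB aH pC pQ U z x (n+1) := by
  unfold Sfun
  rw [← Finset.sum_add_distrib, Finset.mul_sum]
  refine Finset.sum_le_sum fun j _ => ?_
  rw [← Finset.sum_add_distrib, Finset.mul_sum]
  refine Finset.sum_le_sum fun l _ => ?_
  have hs0 := Sfun_summable aH pC pQ haH hpC hpQ hpQs U K hU0 hUK z x j l
    (fun q => min (NB - 1) (n + q))
  have hs2 := Sfun_summable aH pC pQ haH hpC hpQ hpQs U K hU0 hUK z x j l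
    (fun q => min (NB - 1) (n + 2 + q))
  have hs1 := Sfun_summable aH pC pQ haH hpC hpQ hpQs U K hU0 hUK z x j l
    (fun q => min (NB - 1) (n + 1 + q))
  rw [← Summable.tsum_add hs0 hs2, ← tsum_mul_left]
  refine Summable.tsum_le_tsum (fun q => ?_) (hs0.add hs2) (hs1.mul_left 2)
  have h := hUc j l (n + q)
  rw [show n + q + 2 = n + 2 + q by ring, show n + q + 1 = n + 1 + q by ring] at h
  have hnn : 0 ≤ aH z j * pC x l * pQ z q :=
    mul_nonneg (mul_nonneg (haH z j) (hpC x l)) (hpQ z q)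
  nlinarith [h, hnn]

end SfunAux

section ViterAux

variable {NH NC : ℕ} (NB : ℕ) (aH : Fin NH → Fin NH → ℝ)
  (pC : Fin NC → Fin NC → ℝ) (pQ : Fin NH → ℕ → ℝ) (r : Fin NC → ℝ) (lam : ℝ)

lemma Va_eq_Sfun (V : Fin NH → Fin NC → ℕ → ℝ) (a : ℕ) (z : Fin NH) (x : Fin NC) (y : ℕ) :
    Va NB aH pC pQ r lam V a z x y = a * r x + lam * Sfun NB aH pC pQ V z x (y - a) := rfl

lemma Viter_succ_zero (i : ℕ) (z : Fin NH) (x : Fin NC) :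
    Viter NB aH pC pQ r lam (i+1) z x 0
      = Va NB aH pC pQ r lam (Viter NB aH pC pQ r lam i) 0 z x 0 := by
  show (Finset.range (min 0 1 + 1)).sup' Finset.nonempty_range_add_one _ = _
  norm_num

lemma Viter_succ_succ (i : ℕ) (z : Fin NH) (x : Fin NC) (n : ℕ) :
    Viter NB aH pC pQ r lam (i+1) z x (n+1)
      = max (Va NB aH pC pQ r lam (Viter NB aH pC pQ r lam i) 0 z x (n+1))
          (Va NB aH pC pQ r lam (Viter NB aH pC pQ r lam i) 1 z x (n+1)) := by
  show (Finset.range (min (n+1) 1 + 1)).sup' Finset.nonempty_range_add_one _ = _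
  rw [show min (n+1) 1 = 1 by omega]
  apply le_antisymm
  · refine Finset.sup'_le _ _ fun a ha => ?_
    rw [Finset.mem_range] at ha
    interval_cases a
    · exact le_max_left _ _
    · exact le_max_right _ _
  · refine max_le ?_ ?_
    · exact Finset.le_sup' (fun a => Va NB aH pC pQ r lam (Viter NB aH pC pQ r lam i) a z x (n+1))
        (show (0:ℕ) ∈ Finset.range (1+1) by decide)
    · exact Finset.le_sup' (fun a => Va NB aH pC pQ r lam (Viter NB aH pC pQ r lam i) a z x (n+1))
        (show (1:ℕ) ∈ Finset.range (1+1) by decide)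

variable (haH : ∀ z j, 0 ≤ aH z j) (haHsum : ∀ z, ∑ j, aH z j = 1)
  (hpC : ∀ x l, 0 ≤ pC x l) (hpCsum : ∀ x, ∑ l, pC x l = 1)
  (hpQ : ∀ z q, 0 ≤ pQ z q) (hpQs : ∀ z, Summable (pQ z))
  (hpQsum : ∀ z, (∑' q, pQ z q) = 1)
  (hr : ∀ x, 0 ≤ r x) (hlam0 : 0 ≤ lam) (hlam1 : lam ≤ 1)

include haH haHsum hpC hpCsum hpQ hpQs hpQsum hr hlam0 hlam1 in
lemma Viter_bounds (i : ℕ) : ∀ (z : Fin NH) (x : Fin NC) (y : ℕ),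
    0 ≤ Viter NB aH pC pQ r lam i z x y ∧
    Viter NB aH pC pQ r lam i z x y ≤ i * (∑ l, r l) := by
  induction i with
  | zero => intro z x y; constructor <;> simp [Viter]
  | succ i ih =>
    intro z x y
    have hB0 : 0 ≤ ∑ l, r l := Finset.sum_nonneg fun l _ => hr l
    have hrB : r x ≤ ∑ l, r l := Finset.single_le_sum (fun l _ => hr l) (Finset.mem_univ x)
    have hU0 : ∀ j l m, 0 ≤ Viter NB aH pC pQ r lam i j l m := fun j l m => (ih j l m).1
    have hUK : ∀ j l m, Viter NB aH pC pQ r lam i j l m ≤ i * (∑ l, r l) :=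
      fun j l m => (ih j l m).2
    have hS0 : ∀ n, 0 ≤ Sfun NB aH pC pQ (Viter NB aH pC pQ r lam i) z x n :=
      fun n => Sfun_nonneg NB aH pC pQ haH hpC hpQ _ hU0 z x n
    have hSK : ∀ n, Sfun NB aH pC pQ (Viter NB aH pC pQ r lam i) z x n ≤ i * (∑ l, r l) :=
      fun n => Sfun_le NB aH pC pQ haH hpC hpQ hpQs haHsum hpCsum hpQsum _ _ hU0 hUK z x n
    constructor
    · show 0 ≤ (Finset.range (min y 1 + 1)).sup' Finset.nonempty_range_add_one
        (fun a => Va NB aH pC pQ r lam (Viter NB aH pC pQ r lam i) a z x y)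
      have hle : Va NB aH pC pQ r lam (Viter NB aH pC pQ r lam i) 0 z x y
          ≤ (Finset.range (min y 1 + 1)).sup' Finset.nonempty_range_add_one
            (fun a => Va NB aH pC pQ r lam (Viter NB aH pC pQ r lam i) a z x y) :=
        Finset.le_sup' (fun a => Va NB aH pC pQ r lam (Viter NB aH pC pQ r lam i) a z x y)
          (show (0:ℕ) ∈ Finset.range (min y 1 + 1) by simp)
      refine le_trans ?_ hle
      rw [Va_eq_Sfun]
      push_cast
      rw [zero_mul, zero_add]
      exact mul_nonneg hlam0 (hS0 _)
    · show (Finset.range (min y 1 + 1)).sup' Finset.nonempty_range_add_one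
        (fun a => Va NB aH pC pQ r lam (Viter NB aH pC pQ r lam i) a z x y) ≤ _
      refine Finset.sup'_le _ _ fun a ha => ?_
      rw [Finset.mem_range] at ha
      have ha1 : (a:ℝ) ≤ 1 := by
        have : a ≤ 1 := by omega
        exact_mod_cast this
      have ha0 : (0:ℝ) ≤ (a:ℝ) := Nat.cast_nonneg a
      rw [Va_eq_Sfun]
      have e1 : (a:ℝ) * r x ≤ r x := by nlinarith [hr x]
      have e2 : lam * Sfun NB aH pC pQ (Viter NB aH pC pQ r lam i) z x (y - a)
          ≤ Sfun NB aH pC pQ (Viter NB aH pC pQ r lam i) z x (y - a) := by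
        nlinarith [hS0 (y - a)]
      push_cast
      nlinarith [hSK (y - a)]

include haH haHsum hpC hpCsum hpQ hpQs hpQsum hr hlam0 hlam1 in
lemma Viter_mc (i : ℕ) : ∀ (z : Fin NH) (x : Fin NC) (m : ℕ),
    (Viter NB aH pC pQ r lam i z x (min (NB-1) m)
      ≤ Viter NB aH pC pQ r lam i z x (min (NB-1) (m+1))) ∧
    (Viter NB aH pC pQ r lam i z x (min (NB-1) m)
        + Viter NB aH pC pQ r lam i z x (min (NB-1) (m+2))
      ≤ 2 * Viter NB aH pC pQ r lam i z x (min (NB-1) (m+1))) := by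
  induction i with
  | zero => intro z x m; constructor <;> norm_num [Viter]
  | succ i ih =>
    intro z x m
    have hb := Viter_bounds NB aH pC pQ r lam haH haHsum hpC hpCsum hpQ hpQs hpQsum hr hlam0 hlam1 i
    have hU0 : ∀ j l m, 0 ≤ Viter NB aH pC pQ r lam i j l m := fun j l m => (hb j l m).1
    have hUK : ∀ j l m, Viter NB aH pC pQ r lam i j l m ≤ i * (∑ l, r l) :=
      fun j l m => (hb j l m).2
    have hfm : ∀ n, lam * Sfun NB aH pC pQ (Viter NB aH pC pQ r lam i) z x n
        ≤ lam * Sfun NB aH pC pQ (Viter NB aH pC pQ r lam i) z x (n+1) := fun n =>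
      mul_le_mul_of_nonneg_left
        (Sfun_mono NB aH pC pQ haH hpC hpQ hpQs _ _ hU0 hUK
          (fun j l m => (ih j l m).1) z x n) hlam0
    have hfc : ∀ n, lam * Sfun NB aH pC pQ (Viter NB aH pC pQ r lam i) z x n
          + lam * Sfun NB aH pC pQ (Viter NB aH pC pQ r lam i) z x (n+2)
        ≤ 2 * (lam * Sfun NB aH pC pQ (Viter NB aH pC pQ r lam i) z x (n+1)) := by
      intro n
      have h := Sfun_concave NB aH pC pQ haH hpC hpQ hpQs _ _ hU0 hUK
        (fun j l m => (ih j l m).2) z x n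
      nlinarith [h, hlam0]
    have hG0 : Viter NB aH pC pQ r lam (i+1) z x 0
        = lam * Sfun NB aH pC pQ (Viter NB aH pC pQ r lam i) z x 0 := by
      rw [Viter_succ_zero, Va_eq_Sfun]
      push_cast
      rw [zero_mul, zero_add]
    have hGs : ∀ n, Viter NB aH pC pQ r lam (i+1) z x (n+1)
        = max (lam * Sfun NB aH pC pQ (Viter NB aH pC pQ r lam i) z x (n+1))
            (r x + lam * Sfun NB aH pC pQ (Viter NB aH pC pQ r lam i) z x n) := by
      intro n
      rw [Viter_succ_succ, Va_eq_Sfun, Va_eq_Sfun]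
      push_cast
      rw [zero_mul, zero_add, one_mul]
    have hmc := gmax_aux (fun n => lam * Sfun NB aH pC pQ (Viter NB aH pC pQ r lam i) z x n)
      (fun n => Viter NB aH pC pQ r lam (i+1) z x n) (r x) hfm hfc hG0 hGs
    exact ⟨(cap_aux _ (NB-1) hmc.1 hmc.2).1 m, (cap_aux _ (NB-1) hmc.1 hmc.2).2 m⟩

end ViterAux

/-- Theorem 2: for every iteration index `i`, the difference function
`Θ_i(z,x,·)` is monotonically non-decreasing on `{1,…,N_B−1}`; consequently the optimal
on-off transmission policy at iteration `i` has a threshold structure in the battery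
level. -/
theorem theta_monotone_and_threshold_structure {NH NC : ℕ} (NB : ℕ)
    (hNH : 1 ≤ NH) (hNC : 1 ≤ NC) (hNB : 2 ≤ NB)
    (aH : Fin NH → Fin NH → ℝ) (pC : Fin NC → Fin NC → ℝ)
    (pQ : Fin NH → ℕ → ℝ) (r : Fin NC → ℝ) (lam : ℝ)
    (haH : ∀ z j, 0 ≤ aH z j) (haHsum : ∀ z, ∑ j, aH z j = 1)
    (hpC : ∀ x l, 0 ≤ pC x l) (hpCsum : ∀ x, ∑ l, pC x l = 1)
    (hpQ : ∀ z q, 0 ≤ pQ z q) (hpQsummable : ∀ z, Summable (pQ z))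
    (hpQsum : ∀ z, (∑' q, pQ z q) = 1)
    (hr : ∀ x, 0 ≤ r x) (hlam0 : 0 ≤ lam) (hlam1 : lam ≤ 1) :
    (∀ (i : ℕ) (z : Fin NH) (x : Fin NC) (y : ℕ), 1 ≤ y → y ≤ NB - 2 →
      Theta NB aH pC pQ r lam i z x y ≤ Theta NB aH pC pQ r lam i z x (y + 1)) ∧
    ∀ (i : ℕ) (z : Fin NH) (x : Fin NC), ∃ κ : ℕ, κ ≤ NB - 1 ∧
      (∀ y : ℕ, 1 ≤ y → y ≤ κ → Theta NB aH pC pQ r lam i z x y < 0) ∧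
      (∀ y : ℕ, κ + 1 ≤ y → y ≤ NB - 1 → 0 ≤ Theta NB aH pC pQ r lam i z x y) := by
  classical
  have part1 : ∀ (i : ℕ) (z : Fin NH) (x : Fin NC) (y : ℕ), 1 ≤ y →
      Theta NB aH pC pQ r lam i z x y ≤ Theta NB aH pC pQ r lam i z x (y + 1) := by
    intro i
    cases i with
    | zero => intro z x y _; simp [Theta, VIa]
    | succ i =>
      intro z x y hy
      obtain ⟨y', rfl⟩ : ∃ y', y = y' + 1 := ⟨y - 1, by omega⟩
      have hb := Viter_bounds NB aH pC pQ r lam haH haHsum hpC hpCsum hpQ hpQsummable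
        hpQsum hr hlam0 hlam1 i
      have hU0 : ∀ j l m, 0 ≤ Viter NB aH pC pQ r lam i j l m := fun j l m => (hb j l m).1
      have hUK : ∀ j l m, Viter NB aH pC pQ r lam i j l m ≤ i * (∑ l, r l) :=
        fun j l m => (hb j l m).2
      have hmc := Viter_mc NB aH pC pQ r lam haH haHsum hpC hpCsum hpQ hpQsummable
        hpQsum hr hlam0 hlam1 i
      have hT : ∀ n : ℕ, Theta NB aH pC pQ r lam (i+1) z x (n+1)
          = r x + lam * Sfun NB aH pC pQ (Viter NB aH pC pQ r lam i) z x n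
            - lam * Sfun NB aH pC pQ (Viter NB aH pC pQ r lam i) z x (n+1) := by
        intro n
        show Va NB aH pC pQ r lam (Viter NB aH pC pQ r lam i) 1 z x (n+1)
            - Va NB aH pC pQ r lam (Viter NB aH pC pQ r lam i) 0 z x (n+1) = _
        rw [Va_eq_Sfun, Va_eq_Sfun, Nat.add_sub_cancel, Nat.sub_zero]
        push_cast
        ring
      have hconc := Sfun_concave NB aH pC pQ haH hpC hpQ hpQsummable _ _ hU0 hUK
        (fun j l m => (hmc j l m).2) z x y'
      have he : y' + 1 + 1 = y' + 2 := by omega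
      rw [hT y', hT (y'+1), he]
      nlinarith [mul_le_mul_of_nonneg_left hconc hlam0]
  refine ⟨fun i z x y hy _ => part1 i z x y hy, ?_⟩
  intro i z x
  have chain : ∀ (y' y : ℕ), 1 ≤ y → y ≤ y' →
      Theta NB aH pC pQ r lam i z x y ≤ Theta NB aH pC pQ r lam i z x y' := by
    intro y'
    induction y' with
    | zero => intro y h1 h2; omega
    | succ n ih =>
      intro y h1 h2
      rcases Nat.eq_or_lt_of_le h2 with h | h
      · rw [h]
      · exact le_trans (ih y h1 (by omega)) (part1 i z x n (by omega))
  by_cases hall : ∀ y, 1 ≤ y → y ≤ NB - 1 → 0 ≤ Theta NB aH pC pQ r lam i z x y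
  · exact ⟨0, by omega, fun y h1 h2 => absurd (h1.trans h2) (by omega),
      fun y h1 h2 => hall y (by omega) h2⟩
  · push_neg at hall
    obtain ⟨y0, h1, h2, h3⟩ := hall
    set Sb := (Finset.Icc 1 (NB-1)).filter (fun y => Theta NB aH pC pQ r lam i z x y < 0)
      with hSb
    have hne : Sb.Nonempty := by
      refine ⟨y0, ?_⟩
      rw [hSb, Finset.mem_filter, Finset.mem_Icc]
      exact ⟨⟨h1, h2⟩, h3⟩
    refine ⟨Sb.max' hne, ?_, ?_, ?_⟩
    · have hm := Finset.mem_filter.mp (Sb.max'_mem hne)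
      exact (Finset.mem_Icc.mp hm.1).2
    · intro y hy1 hy2
      have hm := Finset.mem_filter.mp (Sb.max'_mem hne)
      exact lt_of_le_of_lt (chain _ y hy1 hy2) hm.2
    · intro y hy1 hy2
      by_contra hneg
      push_neg at hneg
      have hmem : y ∈ Sb := by
        rw [hSb, Finset.mem_filter, Finset.mem_Icc]
        exact ⟨⟨by omega, hy2⟩, hneg⟩
      have := Finset.le_max' Sb y hmem
      omega
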